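/- Let n ≥ 1 and let f and g be continuous probability densities on ℝ that are strictly positive on a common support, with cdfs F and G, F strictly increasing with inverse F^{-1}, and suppose all integrals below exist and are finite. Then the KL information between a perfect RSS from f and a perfect RSS from g decomposes as Σ_{i=1}^n K(f_(i), g_(i)) = n·K(f,g) + A_n(F,G), where A_n(F,G) = −n·(n-1)/2 − n·(n-1)·∫_0^1 [ u·log G(F^{-1}(u)) + (1-u)·log(1 − G(F^{-1}(u))) ] du. -/

import Mathlib

open MeasureTheory Real

/-- Cumulative distribution function of a density `f`. -/
noncomputable def cdfOf (f : ℝ → ℝ) (x : ℝ) : ℝ := ∫ t in Set.Iic x, f t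

/-- Density of the `i`-th order statistic from a sample of size `n` with parent density `f`. -/
noncomputable def osDen (f : ℝ → ℝ) (n i : ℕ) (x : ℝ) : ℝ :=
  (i : ℝ) * (n.choose i : ℝ) * (cdfOf f x) ^ (i - 1) * (1 - cdfOf f x) ^ (n - i) * f x

/-- Kullback–Leibler divergence between densities `p` and `q`. -/
noncomputable def KL (p q : ℝ → ℝ) : ℝ := ∫ x, p x * Real.log (p x / q x)

namespace RSSaux
open Set

lemma integrable_of_integral_eq_one {f : ℝ → ℝ} (h : ∫ x, f x = 1) : Integrable f := by
  by_contra hc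
  rw [integral_undef hc] at h
  norm_num at h

lemma abs_mul_log_le_one {u : ℝ} (h0 : 0 ≤ u) (h1 : u ≤ 1) : |u * Real.log u| ≤ 1 := by
  rcases eq_or_lt_of_le h0 with h | h
  · simp [← h]
  · have hlog : Real.log u ≤ 0 := Real.log_nonpos h0 h1
    have hloginv : Real.log u⁻¹ ≤ u⁻¹ - 1 := Real.log_le_sub_one_of_pos (by positivity)
    have habs : |u * Real.log u| = u * Real.log u⁻¹ := by
      rw [Real.log_inv, abs_of_nonpos (mul_nonpos_iff.2 (Or.inl ⟨h0, hlog⟩))]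
      ring
    rw [habs]
    calc u * Real.log u⁻¹ ≤ u * (u⁻¹ - 1) := by
          apply mul_le_mul_of_nonneg_left hloginv h0
      _ = 1 - u := by field_simp
      _ ≤ 1 := by linarith

lemma sum_b1 (n : ℕ) (hn : 1 ≤ n) (p : ℝ) :
    ∑ i ∈ Finset.Icc 1 n, (i:ℝ) * (n.choose i : ℝ) * p^(i-1) * (1-p)^(n-i) = n := by
  obtain ⟨m, rfl⟩ : ∃ m, n = m + 1 := ⟨n-1, by omega⟩
  have hset : Finset.range (m+2) = insert 0 (Finset.Icc 1 (m+1)) := by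
    ext i; simp [Finset.mem_range, Finset.mem_Icc]; omega
  have h0 : ((0:ℕ):ℝ) * ((m+1).choose 0 : ℝ) * p^(0-1) * (1-p)^(m+1-0) = 0 := by
    push_cast; ring
  have key : ∑ i ∈ Finset.range (m+2), (i:ℝ) * ((m+1).choose i : ℝ) * p^(i-1) * (1-p)^(m+1-i)
      = ∑ i ∈ Finset.Icc 1 (m+1), (i:ℝ) * ((m+1).choose i : ℝ) * p^(i-1) * (1-p)^(m+1-i) := by
    rw [hset, Finset.sum_insert (by simp), h0, zero_add]
  rw [← key, Finset.sum_range_succ' _ (m+1), h0, add_zero]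
  have hterm : ∀ j ∈ Finset.range (m+1), ((j+1:ℕ):ℝ) * ((m+1).choose (j+1) : ℝ) * p^(j+1-1) * (1-p)^(m+1-(j+1))
      = ((m+1:ℕ):ℝ) * ((m.choose j : ℝ) * (p^j * (1-p)^(m-j))) := by
    intro j _
    have hc : (m+1) * m.choose j = (m+1).choose (j+1) * (j+1) := Nat.add_one_mul_choose_eq m j
    have hc' : ((j+1:ℕ):ℝ) * ((m+1).choose (j+1) : ℝ) = ((m+1:ℕ):ℝ) * (m.choose j : ℝ) := by
      have := congrArg (Nat.cast (R := ℝ)) hc; push_cast at this ⊢; linarith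
    have he1 : j + 1 - 1 = j := rfl
    have he2 : m + 1 - (j+1) = m - j := by omega
    rw [he1, he2, mul_assoc, mul_assoc, ← mul_assoc, hc']; ring
  rw [Finset.sum_congr rfl hterm, ← Finset.mul_sum]
  have hbin := add_pow p (1-p) m
  simp only [add_sub_cancel, one_pow] at hbin
  have h1 : ∑ j ∈ Finset.range (m+1), (m.choose j : ℝ) * (p^j * (1-p)^(m-j))
      = ∑ j ∈ Finset.range (m+1), p^j * (1-p)^(m-j) * (m.choose j : ℝ) :=
    Finset.sum_congr rfl (fun k _ => by ring)
  rw [h1, ← hbin, mul_one]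
lemma sum_b2 (n : ℕ) (hn : 2 ≤ n) (p : ℝ) :
    ∑ i ∈ Finset.Icc 1 n, ((i:ℝ)-1) * ((i:ℝ) * (n.choose i : ℝ) * p^(i-1) * (1-p)^(n-i))
      = (n:ℝ) * ((n:ℝ)-1) * p := by
  obtain ⟨m, rfl⟩ : ∃ m, n = m + 2 := ⟨n-2, by omega⟩
  set φ : ℕ → ℝ := fun i => ((i:ℝ)-1) * ((i:ℝ) * ((m+2).choose i : ℝ) * p^(i-1) * (1-p)^(m+2-i)) with hφ
  have hset : Finset.range (m+3) = insert 0 (Finset.Icc 1 (m+2)) := by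
    ext i; simp [Finset.mem_range, Finset.mem_Icc]; omega
  have h0 : φ 0 = 0 := by simp [hφ]
  have h1 : φ 1 = 0 := by simp [hφ]
  have key : ∑ i ∈ Finset.range (m+3), φ i = ∑ i ∈ Finset.Icc 1 (m+2), φ i := by
    rw [hset, Finset.sum_insert (by simp), h0, zero_add]
  rw [show (∑ i ∈ Finset.Icc 1 (m+2), ((i:ℝ)-1) * ((i:ℝ) * ((m+2).choose i : ℝ) * p^(i-1) * (1-p)^(m+2-i))) = ∑ i ∈ Finset.Icc 1 (m+2), φ i from rfl, ← key]
  rw [Finset.sum_range_succ' φ (m+2), h0, add_zero]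
  rw [Finset.sum_range_succ' (fun j => φ (j+1)) (m+1), h1, add_zero]
  have hterm : ∀ j ∈ Finset.range (m+1), φ (j+2)
      = ((m+2:ℕ):ℝ) * ((m+1:ℕ):ℝ) * p * ((m.choose j : ℝ) * (p^j * (1-p)^(m-j))) := by
    intro j _
    have hc1 : (m+2) * (m+1).choose (j+1) = (m+2).choose (j+2) * (j+2) := Nat.add_one_mul_choose_eq (m+1) (j+1)
    have hc2 : (m+1) * m.choose j = (m+1).choose (j+1) * (j+1) := Nat.add_one_mul_choose_eq m j
    have hc : ((j+2:ℕ):ℝ) * ((j+1:ℕ):ℝ) * ((m+2).choose (j+2) : ℝ)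
        = ((m+2:ℕ):ℝ) * ((m+1:ℕ):ℝ) * (m.choose j : ℝ) := by
      have e1 := congrArg (Nat.cast (R := ℝ)) hc1
      have e2 := congrArg (Nat.cast (R := ℝ)) hc2
      push_cast at e1 e2 ⊢
      nlinarith [e1, e2]
    have he1 : j + 2 - 1 = j + 1 := rfl
    have he2 : m + 2 - (j+2) = m - j := by omega
    simp only [hφ, he1, he2]
    have : ((j+2:ℕ):ℝ) - 1 = ((j+1:ℕ):ℝ) := by push_cast; ring
    push_cast at hc ⊢
    linear_combination (p * p^j * (1-p)^(m-j)) * hc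
  rw [Finset.sum_congr rfl hterm, ← Finset.mul_sum]
  have hbin := add_pow p (1-p) m
  simp only [add_sub_cancel, one_pow] at hbin
  have h2 : ∑ j ∈ Finset.range (m+1), (m.choose j : ℝ) * (p^j * (1-p)^(m-j))
      = ∑ j ∈ Finset.range (m+1), p^j * (1-p)^(m-j) * (m.choose j : ℝ) :=
    Finset.sum_congr rfl (fun k _ => by ring)
  rw [h2, ← hbin, mul_one]
  push_cast; ring

lemma sum_b3 (n : ℕ) (hn : 2 ≤ n) (p : ℝ) :
    ∑ i ∈ Finset.Icc 1 n, ((n:ℝ)-(i:ℝ)) * ((i:ℝ) * (n.choose i : ℝ) * p^(i-1) * (1-p)^(n-i))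
      = (n:ℝ) * ((n:ℝ)-1) * (1-p) := by
  have h : ∀ i ∈ Finset.Icc 1 n, ((n:ℝ)-(i:ℝ)) * ((i:ℝ) * (n.choose i : ℝ) * p^(i-1) * (1-p)^(n-i))
      = ((n:ℝ)-1) * ((i:ℝ) * (n.choose i : ℝ) * p^(i-1) * (1-p)^(n-i))
        - ((i:ℝ)-1) * ((i:ℝ) * (n.choose i : ℝ) * p^(i-1) * (1-p)^(n-i)) :=
    fun i _ => by ring
  rw [Finset.sum_congr rfl h, Finset.sum_sub_distrib, ← Finset.mul_sum,
    sum_b1 n (by omega) p, sum_b2 n hn p]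
  ring

section cdf
variable {f : ℝ → ℝ}

lemma cdfOf_sub (hf_i : Integrable f) (a b : ℝ) : cdfOf f b - cdfOf f a = ∫ t in a..b, f t :=
  intervalIntegral.integral_Iic_sub_Iic hf_i.integrableOn hf_i.integrableOn

lemma cdfOf_hasDerivAt (hf_cont : Continuous f) (hf_i : Integrable f) (x : ℝ) :
    HasDerivAt (cdfOf f) (f x) x := by
  have h : ∀ y, cdfOf f y = cdfOf f 0 + ∫ t in (0:ℝ)..y, f t := by
    intro y
    have := cdfOf_sub hf_i 0 y; linarith
  have hd : HasDerivAt (fun y => cdfOf f 0 + ∫ t in (0:ℝ)..y, f t) (f x) x := by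
    apply HasDerivAt.const_add
    exact intervalIntegral.integral_hasDerivAt_right
      hf_i.intervalIntegrable hf_i.aestronglyMeasurable.stronglyMeasurableAtFilter
      hf_cont.continuousAt
  exact hd.congr_of_eventuallyEq (Filter.Eventually.of_forall (fun y => h y))

lemma cdfOf_continuous (hf_cont : Continuous f) (hf_i : Integrable f) : Continuous (cdfOf f) :=
  continuous_iff_continuousAt.2 fun x => (cdfOf_hasDerivAt hf_cont hf_i x).continuousAt

lemma cdfOf_nonneg (hf0 : ∀ x, 0 ≤ f x) (x : ℝ) : 0 ≤ cdfOf f x :=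
  setIntegral_nonneg measurableSet_Iic (fun t _ => hf0 t)

lemma cdfOf_le_one (hf_i : Integrable f) (hf0 : ∀ x, 0 ≤ f x) (hf1 : ∫ x, f x = 1) (x : ℝ) :
    cdfOf f x ≤ 1 := by
  rw [← hf1]
  exact setIntegral_le_integral hf_i (Filter.Eventually.of_forall hf0)

lemma cdfOf_pos (hf_cont : Continuous f) (hf_i : Integrable f) (hf0 : ∀ x, 0 ≤ f x)
    {x : ℝ} (hx : 0 < f x) : 0 < cdfOf f x := by
  obtain ⟨ε, hε, hball⟩ := Metric.isOpen_iff.1 (isOpen_lt continuous_const hf_cont) x hx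
  have hpos : 0 < ∫ t in (x - ε/2)..x, f t := by
    apply intervalIntegral.intervalIntegral_pos_of_pos_on hf_i.intervalIntegrable
    · intro t ht
      refine hball ?_
      simp only [Metric.mem_ball, Real.dist_eq, abs_lt]
      obtain ⟨h1, h2⟩ := ht
      constructor <;> linarith
    · linarith
  have hs := cdfOf_sub hf_i (x - ε/2) x
  have h0 : 0 ≤ cdfOf f (x - ε/2) := cdfOf_nonneg hf0 _
  linarith

lemma cdfOf_lt_one (hf_cont : Continuous f) (hf_i : Integrable f) (hf0 : ∀ x, 0 ≤ f x)
    (hf1 : ∫ x, f x = 1) {x : ℝ} (hx : 0 < f x) : cdfOf f x < 1 := by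
  obtain ⟨ε, hε, hball⟩ := Metric.isOpen_iff.1 (isOpen_lt continuous_const hf_cont) x hx
  have hpos : 0 < ∫ t in x..(x + ε/2), f t := by
    apply intervalIntegral.intervalIntegral_pos_of_pos_on hf_i.intervalIntegrable
    · intro t ht
      refine hball ?_
      simp only [Metric.mem_ball, Real.dist_eq, abs_lt]
      obtain ⟨h1, h2⟩ := ht
      constructor <;> linarith
    · linarith
  have hsplit : cdfOf f x + ∫ t in Ioi x, f t = 1 := by
    rw [← hf1]; exact intervalIntegral.integral_Iic_add_Ioi hf_i.integrableOn hf_i.integrableOn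
  have hmono : (∫ t in x..(x+ε/2), f t) ≤ ∫ t in Ioi x, f t := by
    rw [intervalIntegral.integral_of_le (by linarith)]
    apply setIntegral_mono_set hf_i.integrableOn (Filter.Eventually.of_forall hf0)
    exact HasSubset.Subset.eventuallyLE Ioc_subset_Ioi_self
  linarith

end cdf

lemma pointwise_sum (n : ℕ) (hn : 2 ≤ n) {p P fx gx : ℝ}
    (hp0 : 0 < p) (hp1 : p < 1) (hP0 : 0 < P) (hP1 : P < 1) (hfx : 0 < fx) (hgx : 0 < gx) :
    ∑ i ∈ Finset.Icc 1 n,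
      ((i:ℝ) * (n.choose i : ℝ) * p^(i-1) * (1-p)^(n-i) * fx) *
        Real.log (((i:ℝ) * (n.choose i : ℝ) * p^(i-1) * (1-p)^(n-i) * fx) /
          ((i:ℝ) * (n.choose i : ℝ) * P^(i-1) * (1-P)^(n-i) * gx))
      = (n:ℝ) * (fx * Real.log (fx/gx))
        + (n:ℝ) * ((n:ℝ)-1) * (fx * (p * Real.log p + (1-p) * Real.log (1-p)))
        - (n:ℝ) * ((n:ℝ)-1) * (fx * (p * Real.log P + (1-p) * Real.log (1-P))) := by
  have hq0 : 0 < 1 - p := by linarith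
  have hQ0 : 0 < 1 - P := by linarith
  have step : ∀ i ∈ Finset.Icc 1 n,
      ((i:ℝ) * (n.choose i : ℝ) * p^(i-1) * (1-p)^(n-i) * fx) *
        Real.log (((i:ℝ) * (n.choose i : ℝ) * p^(i-1) * (1-p)^(n-i) * fx) /
          ((i:ℝ) * (n.choose i : ℝ) * P^(i-1) * (1-P)^(n-i) * gx))
      = (fx * (Real.log p - Real.log P)) * (((i:ℝ)-1) * ((i:ℝ) * (n.choose i : ℝ) * p^(i-1) * (1-p)^(n-i)))
        + (fx * (Real.log (1-p) - Real.log (1-P))) * (((n:ℝ)-(i:ℝ)) * ((i:ℝ) * (n.choose i : ℝ) * p^(i-1) * (1-p)^(n-i)))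
        + (fx * Real.log (fx/gx)) * ((i:ℝ) * (n.choose i : ℝ) * p^(i-1) * (1-p)^(n-i)) := by
    intro i hi
    rw [Finset.mem_Icc] at hi
    obtain ⟨hi1, hin⟩ := hi
    have hipos : (0:ℝ) < (i:ℝ) := by exact_mod_cast hi1
    have hcpos : (0:ℝ) < (n.choose i : ℝ) := by
      exact_mod_cast Nat.choose_pos hin
    have hppow : (0:ℝ) < p^(i-1) := pow_pos hp0 _
    have hqpow : (0:ℝ) < (1-p)^(n-i) := pow_pos hq0 _
    have hPpow : (0:ℝ) < P^(i-1) := pow_pos hP0 _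
    have hQpow : (0:ℝ) < (1-P)^(n-i) := pow_pos hQ0 _
    have hnum : (0:ℝ) < (i:ℝ) * (n.choose i : ℝ) * p^(i-1) * (1-p)^(n-i) * fx := by positivity
    have hden : (0:ℝ) < (i:ℝ) * (n.choose i : ℝ) * P^(i-1) * (1-P)^(n-i) * gx := by positivity
    rw [Real.log_div hnum.ne' hden.ne']
    rw [Real.log_mul (by positivity) hfx.ne', Real.log_mul (by positivity) hqpow.ne',
        Real.log_mul (by positivity) hppow.ne',
        Real.log_mul (by positivity) hgx.ne', Real.log_mul (by positivity) hQpow.ne',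
        Real.log_mul (by positivity) hPpow.ne']
    rw [Real.log_pow, Real.log_pow, Real.log_pow, Real.log_pow]
    rw [Real.log_div hfx.ne' hgx.ne']
    have hci : ((i-1 : ℕ) : ℝ) = (i:ℝ) - 1 := by
      have : (1:ℕ) ≤ i := hi1
      push_cast [Nat.cast_sub this]; ring
    have hcn : ((n-i : ℕ) : ℝ) = (n:ℝ) - (i:ℝ) := by
      push_cast [Nat.cast_sub hin]; ring
    rw [hci, hcn]
    ring
  rw [Finset.sum_congr rfl step]
  rw [Finset.sum_add_distrib, Finset.sum_add_distrib, ← Finset.mul_sum, ← Finset.mul_sum, ← Finset.mul_sum]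
  rw [sum_b1 n (by omega) p, sum_b2 n hn p, sum_b3 n hn p]
  ring

lemma integral_entropy_aux :
    ∫ u in Ioo (0:ℝ) 1, (u * Real.log u + (1-u) * Real.log (1-u)) = -(1/2 : ℝ) := by
  have hIoc : ∫ u in Ioo (0:ℝ) 1, (u * Real.log u + (1-u) * Real.log (1-u))
      = ∫ u in (0:ℝ)..1, (u * Real.log u + (1-u) * Real.log (1-u)) := by
    rw [intervalIntegral.integral_of_le zero_le_one, integral_Ioc_eq_integral_Ioo]
  rw [hIoc]
  set K : ℝ → ℝ := fun u => (u/2 * (u * Real.log u) - u^2/4) - ((1-u)/2 * ((1-u) * Real.log (1-u)) - (1-u)^2/4) with hK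
  have hcont : ContinuousOn K (Icc 0 1) := by
    apply Continuous.continuousOn
    have c1 : Continuous fun u : ℝ => u * Real.log u := Real.continuous_mul_log
    have c2 : Continuous fun u : ℝ => (1-u) * Real.log (1-u) :=
      c1.comp (continuous_const.sub continuous_id)
    exact (((continuous_id.div_const 2).mul c1).sub ((continuous_pow 2).div_const 4)).sub
      ((((continuous_const.sub continuous_id).div_const 2).mul c2).sub
        (((continuous_const.sub continuous_id).pow 2).div_const 4))
  have hderiv : ∀ u ∈ Ioo (0:ℝ) 1, HasDerivAt K (u * Real.log u + (1-u) * Real.log (1-u)) u := by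
    intro u hu
    obtain ⟨hu0, hu1⟩ := hu
    have h1 : HasDerivAt (fun u : ℝ => u/2 * (u * Real.log u) - u^2/4) (u * Real.log u) u := by
      have hlog : HasDerivAt Real.log u⁻¹ u := Real.hasDerivAt_log hu0.ne'
      have : HasDerivAt (fun u : ℝ => u/2 * (u * Real.log u) - u^2/4)
          ((1/2) * (u * Real.log u) + u/2 * (1 * Real.log u + u * u⁻¹) - (2*u)/4) u := by
        apply HasDerivAt.sub
        · exact ((hasDerivAt_id u).div_const 2).mul ((hasDerivAt_id u).mul hlog)
        · simpa using ((hasDerivAt_pow 2 u).div_const 4)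
      convert this using 1
      field_simp
      ring
    have h2 : HasDerivAt (fun u : ℝ => (1-u)/2 * ((1-u) * Real.log (1-u)) - (1-u)^2/4)
        (-((1-u) * Real.log (1-u))) u := by
      have hbase : HasDerivAt (fun u : ℝ => 1 - u) (-1) u := by
        simpa using (hasDerivAt_id u).const_sub 1
      have houter : HasDerivAt (fun v : ℝ => v/2 * (v * Real.log v) - v^2/4)
          ((1-u) * Real.log (1-u)) (1-u) := by
        have hv0 : (0:ℝ) < 1 - u := by linarith
        have hlog : HasDerivAt Real.log (1-u)⁻¹ (1-u) := Real.hasDerivAt_log hv0.ne'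
        have : HasDerivAt (fun v : ℝ => v/2 * (v * Real.log v) - v^2/4)
            ((1/2) * ((1-u) * Real.log (1-u)) + (1-u)/2 * (1 * Real.log (1-u) + (1-u) * (1-u)⁻¹) - (2*(1-u))/4) (1-u) := by
          apply HasDerivAt.sub
          · exact ((hasDerivAt_id (1-u)).div_const 2).mul ((hasDerivAt_id (1-u)).mul hlog)
          · simpa using ((hasDerivAt_pow 2 (1-u)).div_const 4)
        convert this using 1
        field_simp
        ring
      have := houter.comp u hbase
      exact this.congr_deriv (by ring)
    have := h1.sub h2
    exact this.congr_deriv (by ring)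
  have hint : IntervalIntegrable (fun u : ℝ => u * Real.log u + (1-u) * Real.log (1-u)) volume 0 1 := by
    apply Continuous.intervalIntegrable
    exact (Real.continuous_mul_log).add ((Real.continuous_mul_log).comp (continuous_const.sub continuous_id))
  rw [intervalIntegral.integral_eq_sub_of_hasDerivAt_of_le zero_le_one hcont hderiv hint]
  simp [hK]
  norm_num

end RSSaux

/-- The KL information between a perfect RSS from `f` and a perfect RSS from `g` decomposes
as `Σ_{i=1}^n K(f_(i), g_(i)) = n·K(f,g) + A_n(F,G)`, where
`A_n(F,G) = −n(n-1)/2 − n(n-1)·∫_0^1 [u·log G(F⁻¹(u)) + (1-u)·log(1 − G(F⁻¹(u)))] du`. -/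
theorem KL_RSS_RSS_decomposition (n : ℕ) (hn : 1 ≤ n) (f g : ℝ → ℝ) (S : Set ℝ)
    (hf_cont : Continuous f) (hf_nonneg : ∀ x, 0 ≤ f x) (hf_int : ∫ x, f x = 1)
    (hg_cont : Continuous g) (hg_nonneg : ∀ x, 0 ≤ g x) (hg_int : ∫ x, g x = 1)
    (hfS : Function.support f = S) (hgS : Function.support g = S)
    (hF_mono : StrictMonoOn (cdfOf f) S)
    (Finv : ℝ → ℝ)
    (hFinv_mem : ∀ u ∈ Set.Ioo (0:ℝ) 1, Finv u ∈ S)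
    (hFinv : ∀ u ∈ Set.Ioo (0:ℝ) 1, cdfOf f (Finv u) = u)
    (hfg : Integrable (fun x => f x * Real.log (f x / g x)))
    (hfgi : ∀ i ∈ Finset.Icc 1 n,
      Integrable (fun x => osDen f n i x * Real.log (osDen f n i x / osDen g n i x)))
    (hA : IntegrableOn
      (fun u => u * Real.log (cdfOf g (Finv u)) + (1 - u) * Real.log (1 - cdfOf g (Finv u)))
      (Set.Ioo (0:ℝ) 1)) :
    (∑ i ∈ Finset.Icc 1 n, KL (osDen f n i) (osDen g n i))
      = (n : ℝ) * KL f g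
        + (-((n : ℝ) * ((n : ℝ) - 1)) / 2
            - (n : ℝ) * ((n : ℝ) - 1) *
              ∫ u in Set.Ioo (0:ℝ) 1,
                (u * Real.log (cdfOf g (Finv u))
                  + (1 - u) * Real.log (1 - cdfOf g (Finv u)))) := by
  rcases eq_or_lt_of_le hn with h1 | h2
  · -- case n = 1
    obtain rfl : n = 1 := h1.symm
    have hof : osDen f 1 1 = f := by funext x; simp [osDen]
    have hog : osDen g 1 1 = g := by funext x; simp [osDen]
    rw [Finset.Icc_self, Finset.sum_singleton, hof, hog]
    norm_num
  -- case 2 ≤ n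
  have hn2 : 2 ≤ n := h2
  have hfi : Integrable f := RSSaux.integrable_of_integral_eq_one hf_int
  have hgi : Integrable g := RSSaux.integrable_of_integral_eq_one hg_int
  have hSopen : IsOpen S := hfS ▸ hf_cont.isOpen_support
  have hSmeas : MeasurableSet S := hSopen.measurableSet
  have hfpos : ∀ x ∈ S, 0 < f x := by
    intro x hx
    rw [← hfS] at hx
    exact lt_of_le_of_ne (hf_nonneg x) (Ne.symm hx)
  have hgpos : ∀ x ∈ S, 0 < g x := by
    intro x hx
    rw [← hgS] at hx
    exact lt_of_le_of_ne (hg_nonneg x) (Ne.symm hx)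
  have hfzero : ∀ x ∉ S, f x = 0 := by
    intro x hx
    rw [← hfS] at hx
    exact Function.notMem_support.mp hx
  have hF0 : ∀ x ∈ S, 0 < cdfOf f x := fun x hx =>
    RSSaux.cdfOf_pos hf_cont hfi hf_nonneg (hfpos x hx)
  have hF1 : ∀ x ∈ S, cdfOf f x < 1 := fun x hx =>
    RSSaux.cdfOf_lt_one hf_cont hfi hf_nonneg hf_int (hfpos x hx)
  have hG0 : ∀ x ∈ S, 0 < cdfOf g x := fun x hx =>
    RSSaux.cdfOf_pos hg_cont hgi hg_nonneg (hgpos x hx)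
  have hG1 : ∀ x ∈ S, cdfOf g x < 1 := fun x hx =>
    RSSaux.cdfOf_lt_one hg_cont hgi hg_nonneg hg_int (hgpos x hx)
  set c : ℝ := (n:ℝ) * ((n:ℝ) - 1) with hc
  have hcpos : 0 < c := by
    have : (2:ℝ) ≤ (n:ℝ) := by exact_mod_cast hn2
    rw [hc]; nlinarith
  set A : ℝ → ℝ := fun x => f x * Real.log (f x / g x) with hA_def
  set B : ℝ → ℝ := fun x => f x * ((cdfOf f x) * Real.log (cdfOf f x)
      + (1 - cdfOf f x) * Real.log (1 - cdfOf f x)) with hB_def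
  set Cc : ℝ → ℝ := fun x => f x * ((cdfOf f x) * Real.log (cdfOf g x)
      + (1 - cdfOf f x) * Real.log (1 - cdfOf g x)) with hCc_def
  set T : ℝ → ℝ := fun x => ∑ i ∈ Finset.Icc 1 n,
      osDen f n i x * Real.log (osDen f n i x / osDen g n i x) with hT_def
  -- pointwise identity
  have hT : ∀ x, T x = (n:ℝ) * A x + c * B x - c * Cc x := by
    intro x
    by_cases hx : x ∈ S
    · have key := RSSaux.pointwise_sum n hn2 (hF0 x hx) (hF1 x hx) (hG0 x hx) (hG1 x hx)
        (hfpos x hx) (hgpos x hx)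
      simp only [hT_def, osDen]
      rw [key]
    · have h0 : f x = 0 := hfzero x hx
      simp [hT_def, hA_def, hB_def, hCc_def, osDen, h0]
  -- integrability
  have hTi : Integrable T := by
    simpa [hT_def] using integrable_finset_sum (μ := volume) (Finset.Icc 1 n) hfgi
  have hAi : Integrable A := hfg
  have hFcont : Continuous (cdfOf f) := RSSaux.cdfOf_continuous hf_cont hfi
  have hBcont : Continuous B := by
    apply hf_cont.mul
    exact ((Real.continuous_mul_log).comp hFcont).add
      ((Real.continuous_mul_log).comp (continuous_const.sub hFcont))
  have hBi : Integrable B := by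
    apply Integrable.mono' (hfi.const_mul 2) hBcont.aestronglyMeasurable
    apply Filter.Eventually.of_forall
    intro x
    have h0 : 0 ≤ cdfOf f x := RSSaux.cdfOf_nonneg hf_nonneg x
    have h1 : cdfOf f x ≤ 1 := RSSaux.cdfOf_le_one hfi hf_nonneg hf_int x
    have e1 : |cdfOf f x * Real.log (cdfOf f x)| ≤ 1 := RSSaux.abs_mul_log_le_one h0 h1
    have e2 : |(1 - cdfOf f x) * Real.log (1 - cdfOf f x)| ≤ 1 :=
      RSSaux.abs_mul_log_le_one (by linarith) (by linarith)
    have : ‖B x‖ = f x * |cdfOf f x * Real.log (cdfOf f x)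
        + (1 - cdfOf f x) * Real.log (1 - cdfOf f x)| := by
      rw [hB_def]; simp [abs_mul, abs_of_nonneg (hf_nonneg x)]
    rw [this]
    calc f x * |cdfOf f x * Real.log (cdfOf f x)
        + (1 - cdfOf f x) * Real.log (1 - cdfOf f x)|
        ≤ f x * (|cdfOf f x * Real.log (cdfOf f x)|
          + |(1 - cdfOf f x) * Real.log (1 - cdfOf f x)|) :=
          mul_le_mul_of_nonneg_left (abs_add_le _ _) (hf_nonneg x)
      _ ≤ f x * 2 := mul_le_mul_of_nonneg_left (by linarith) (hf_nonneg x)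
      _ = 2 * f x := by ring
  have hCci : Integrable Cc := by
    have hrepr : Cc = fun x => c⁻¹ * ((n:ℝ) * A x + c * B x - T x) := by
      funext x
      have h := hT x
      have hcne : c ≠ 0 := ne_of_gt hcpos
      field_simp
      linarith
    rw [hrepr]
    exact (((hAi.const_mul _).add (hBi.const_mul _)).sub hTi).const_mul _
  -- change of variables
  have hFd : ∀ x ∈ S, HasDerivWithinAt (cdfOf f) (f x) S x := fun x _ =>
    (RSSaux.cdfOf_hasDerivAt hf_cont hfi x).hasDerivWithinAt
  have hinj : Set.InjOn (cdfOf f) S := hF_mono.injOn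
  have himg : cdfOf f '' S = Set.Ioo 0 1 := by
    apply Set.Subset.antisymm
    · rintro _ ⟨x, hx, rfl⟩
      exact ⟨hF0 x hx, hF1 x hx⟩
    · intro u hu
      exact ⟨Finv u, hFinv_mem u hu, hFinv u hu⟩
  have COV : ∀ h : ℝ → ℝ, (∫ u in Set.Ioo (0:ℝ) 1, h u) = ∫ x in S, f x * h (cdfOf f x) := by
    intro h
    rw [← himg, integral_image_eq_integral_abs_deriv_smul hSmeas hFd hinj]
    apply setIntegral_congr_fun hSmeas
    intro x hx
    dsimp only
    rw [abs_of_pos (hfpos x hx), smul_eq_mul]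
  -- integral of B
  have hBint : ∫ x, B x = -(1/2 : ℝ) := by
    have hBS : (∫ x in S, B x) = ∫ x, B x := by
      apply setIntegral_eq_integral_of_forall_compl_eq_zero
      intro x hx
      simp [hB_def, hfzero x hx]
    rw [← hBS, ← RSSaux.integral_entropy_aux, COV (fun u => u * Real.log u + (1-u) * Real.log (1-u))]
  -- integral of Cc
  have hCcint : ∫ x, Cc x = ∫ u in Set.Ioo (0:ℝ) 1,
      (u * Real.log (cdfOf g (Finv u)) + (1 - u) * Real.log (1 - cdfOf g (Finv u))) := by
    have hCS : (∫ x in S, Cc x) = ∫ x, Cc x := by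
      apply setIntegral_eq_integral_of_forall_compl_eq_zero
      intro x hx
      simp [hCc_def, hfzero x hx]
    rw [← hCS, COV (fun u => u * Real.log (cdfOf g (Finv u)) + (1 - u) * Real.log (1 - cdfOf g (Finv u)))]
    apply setIntegral_congr_fun hSmeas
    intro x hx
    have hmem : cdfOf f x ∈ Set.Ioo (0:ℝ) 1 := ⟨hF0 x hx, hF1 x hx⟩
    have hfix : Finv (cdfOf f x) = x :=
      hinj (hFinv_mem _ hmem) hx (hFinv _ hmem)
    simp only [hCc_def, hfix]
  -- final computation
  have hKLsum : (∑ i ∈ Finset.Icc 1 n, KL (osDen f n i) (osDen g n i)) = ∫ x, T x := by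
    rw [hT_def]
    simp only [KL]
    exact (integral_finset_sum (Finset.Icc 1 n) hfgi).symm
  have hTint : ∫ x, T x = (n:ℝ) * (∫ x, A x) + c * (∫ x, B x) - c * (∫ x, Cc x) := by
    have hTfun : T = fun x => ((n:ℝ) * A x + c * B x) - c * Cc x := by
      funext x; rw [hT x]
    have i1 : Integrable (fun x => (n:ℝ) * A x + c * B x) := (hAi.const_mul _).add (hBi.const_mul _)
    have i2 : Integrable (fun x => c * Cc x) := hCci.const_mul _
    simp only [hTfun]
    rw [integral_sub i1 i2, integral_add (hAi.const_mul _) (hBi.const_mul _),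
      integral_const_mul, integral_const_mul, integral_const_mul]
  have hKLfg : KL f g = ∫ x, A x := rfl
  rw [hKLsum, hTint, hBint, hCcint, hKLfg]
  ring
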